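/- Let m,n ≥ 3, let Λ be the m×n torus lattice, and let J^x = (J^x_p ≥ 0 : p ∈ F), J^z = (J^z_s ≥ 0 : s ∈ V) be nonnegative couplings. Then the toric code partition function satisfies tr(exp(−H)) = 2^{|E|} · (∏_{s∈V} cosh(J^z_s) + ∏_{s∈V} sinh(J^z_s)) · (∏_{p∈F} cosh(J^x_p) + ∏_{p∈F} sinh(J^x_p)). -/

import Mathlib

open scoped BigOperators

namespace Toric

/-- Vertices of the `m × n` torus lattice. Faces are also indexed by `Vtx`
(the face `p` is the unit square whose lower-left corner is `p`). -/
abbrev Vtx (m n : ℕ) := ZMod m × ZMod n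

/-- Edges of the torus: `(s, true)` is the horizontal edge from `s` to its right
neighbour, `(s, false)` the vertical edge from `s` to its upper neighbour. -/
abbrev Edge (m n : ℕ) := Vtx m n × Bool

variable (m n : ℕ)

/-- The four edges incident to the vertex `s`, in a fixed order:
right, up, left, down. -/
def star (s : Vtx m n) : Fin 4 → Edge m n :=
  ![(s, true), (s, false), ((s.1 - 1, s.2), true), ((s.1, s.2 - 1), false)]

/-- The four edges bounding the face `p`, in a fixed order:
bottom, left, top, right. -/
def faceEdge (p : Vtx m n) : Fin 4 → Edge m n :=
  ![(p, true), (p, false), ((p.1, p.2 + 1), true), ((p.1 + 1, p.2), false)]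

/-- The set of the four edges incident to the vertex `s` (written `e ∼ s`). -/
def starSet (s : Vtx m n) : Finset (Edge m n) := Finset.univ.image (star m n s)

/-- The set of the four edges bounding the face `p` (written `e ∼ p`). -/
def faceSet (p : Vtx m n) : Finset (Edge m n) := Finset.univ.image (faceEdge m n p)

/-- Arrow configurations: each edge points right/up (`true`) or left/down (`false`). -/
abbrev AConf (m n : ℕ) := Edge m n → Bool

/-- Which of the four edges at `s` are incoming (point towards `s`). -/
def incVec (d : AConf m n) (s : Vtx m n) : Fin 4 → Bool :=
  ![!d (star m n s 0), !d (star m n s 1), d (star m n s 2), d (star m n s 3)]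

/-- Eight-vertex condition: every vertex has an even number of incoming arrows. -/
def IsEightVertex (d : AConf m n) : Prop :=
  ∀ s : Vtx m n, Even (Finset.univ.filter (fun i => incVec m n d s i = true)).card

/-- A local vertex type `η : Fin 4 → Bool` (arrow directions of the four incident
edges, in the order right, up, left, down) is one of the eight allowed vertex types
I–VIII iff the number of incoming arrows is even. -/
def IsVertexType (η : Fin 4 → Bool) : Prop :=
  Even (Finset.univ.filter
    (fun i => (![!η 0, !η 1, η 2, η 3] : Fin 4 → Bool) i = true)).card

/-- The event `A^η_C` that every vertex of `C` exhibits the type `η` or its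
total reversal. -/
def EventA (η : Fin 4 → Bool) (C : Finset (Vtx m n)) (d : AConf m n) : Prop :=
  ∀ s ∈ C, (∀ i, d (star m n s i) = η i) ∨ (∀ i, d (star m n s i) = !η i)

/-- The event `A^{η,ν}_C` that every vertex of `C` exhibits the type `η` or `ν`
or one of their total reversals. -/
def EventA2 (η ν : Fin 4 → Bool) (C : Finset (Vtx m n)) (d : AConf m n) : Prop :=
  ∀ s ∈ C, (∀ i, d (star m n s i) = η i) ∨ (∀ i, d (star m n s i) = !η i) ∨
    (∀ i, d (star m n s i) = ν i) ∨ (∀ i, d (star m n s i) = !ν i)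

/-- A non-contractible cycle of vertices of `C`: a cyclic sequence of vertices of `C`
whose consecutive vertices are nearest neighbours on the torus (with the actual
`ℤ²`-valued unit steps recorded), and whose winding number (the total displacement
in `ℤ²`) is nonzero. -/
structure NCCycle (C : Set (Vtx m n)) where
  len : ℕ
  len_pos : 0 < len
  v : ℕ → Vtx m n
  step : ℕ → ℤ × ℤ
  mem : ∀ i < len, v i ∈ C
  unit : ∀ i < len,
    step i = (1, 0) ∨ step i = (-1, 0) ∨ step i = (0, 1) ∨ step i = (0, -1)
  succ : ∀ i < len,
    v (i + 1) = ((v i).1 + ((step i).1 : ZMod m), (v i).2 + ((step i).2 : ZMod n))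
  closed : v len = v 0
  winding : ∑ i ∈ Finset.range len, step i ≠ 0

/-- Hypothesis (★): either `C` contains no non-contractible cycle, or every
non-contractible cycle in `C` has even length. -/
def StarHyp (C : Set (Vtx m n)) : Prop :=
  IsEmpty (NCCycle m n C) ∨ ∀ γ : NCCycle m n C, Even γ.len

section torusProb
variable [NeZero m] [NeZero n]

/-- The set `Δ_8vx` of eight-vertex configurations on the torus. -/
noncomputable def Δ8 : Finset (AConf m n) :=
  haveI := Classical.decPred (IsEightVertex m n)
  Finset.univ.filter (IsEightVertex m n)

/-- The uniform eight-vertex probability measure `μ`. -/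
noncomputable def prob (P : AConf m n → Prop) : ℝ :=
  haveI := Classical.decPred P
  (((Δ8 m n).filter P).card : ℝ) / ((Δ8 m n).card : ℝ)

end torusProb

/-- Spin configurations `Ω = {-1,+1}^E`. -/
abbrev SConf (m n : ℕ) := Edge m n → ℤˣ

section matrices
variable [NeZero m] [NeZero n]

/-- Real matrices indexed by the spin configurations (i.e. operators expressed in
the `σ³` product basis). -/
abbrev Mat (m n : ℕ) [NeZero m] [NeZero n] := Matrix (SConf m n) (SConf m n) ℝ

/-- The spin configuration `x^p`, equal to `-1` exactly on the edges of the face `p`. -/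
def xconf (p : Vtx m n) : SConf m n := fun e => if e ∈ faceSet m n p then -1 else 1

/-- The spin configuration equal to `-1` exactly on the edges of a set `A`. -/
def aconf (A : Finset (Edge m n)) : SConf m n := fun e => if e ∈ A then -1 else 1

/-- The plaquette operator `X_p = ∏_{e ∼ p} σ¹_e`: the permutation matrix flipping
the spins on the four edges of `p`. -/
def X (p : Vtx m n) : Mat m n := fun τ ω => if τ = xconf m n p * ω then 1 else 0

/-- `X_A = ∏_{e ∈ A} σ¹_e`: the permutation matrix flipping the spins on `A`. -/
def XA (A : Finset (Edge m n)) : Mat m n := fun τ ω => if τ = aconf m n A * ω then 1 else 0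

/-- The product `∏_{p ∈ C} X_p` of plaquette operators: the permutation matrix
flipping the spins around all faces of `C`. -/
def XProd (C : Finset (Vtx m n)) : Mat m n :=
  fun τ ω => if τ = (∏ p ∈ C, xconf m n p) * ω then 1 else 0

/-- The star operator `Z_s = ∏_{e ∼ s} σ³_e` (a diagonal matrix). -/
def Z (s : Vtx m n) : Mat m n :=
  Matrix.diagonal fun ω => (((∏ e ∈ starSet m n s, ω e : ℤˣ) : ℤ) : ℝ)

/-- `Z_A = ∏_{e ∈ A} σ³_e` (a diagonal matrix). -/
def ZA (A : Finset (Edge m n)) : Mat m n :=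
  Matrix.diagonal fun ω => (((∏ e ∈ A, ω e : ℤˣ) : ℤ) : ℝ)

/-- The product `∏_{s ∈ D} Z_s` of star operators (a diagonal matrix). -/
def ZProd (D : Finset (Vtx m n)) : Mat m n :=
  Matrix.diagonal fun ω => (((∏ s ∈ D, ∏ e ∈ starSet m n s, ω e : ℤˣ) : ℤ) : ℝ)

/-- The toric code Hamiltonian `H = -∑_p Jˣ_p X_p - ∑_s Jᶻ_s Z_s`. -/
noncomputable def H (Jx Jz : Vtx m n → ℝ) : Mat m n :=
  -∑ p : Vtx m n, Jx p • X m n p - ∑ s : Vtx m n, Jz s • Z m n s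

/-- Matrix exponential. -/
noncomputable def mexp (A : Mat m n) : Mat m n := NormedSpace.exp A

/-- The equilibrium state `⟨A⟩ = tr(A e^{-H}) / tr(e^{-H})`. -/
noncomputable def gibbs (Jx Jz : Vtx m n → ℝ) (A : Mat m n) : ℝ :=
  (A * mexp m n (-H m n Jx Jz)).trace / (mexp m n (-H m n Jx Jz)).trace

end matrices

/-- The scalar `I^ε_s(σ) = (1/16) ∏_{i=1}^4 (1 + ε_i σ_i(s))`. -/
noncomputable def Ifun (ε : Fin 4 → ℤˣ) (s : Vtx m n) (σ : SConf m n) : ℝ :=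
  (1 / 16 : ℝ) * ∏ i : Fin 4, (1 + ((ε i : ℤ) : ℝ) * ((σ (star m n s i) : ℤ) : ℝ))

/-- The scalar `Ī^ε_s(σ) = (1/16) ∏_{i=1}^4 (1 - ε_i σ_i(s))`. -/
noncomputable def Ibar (ε : Fin 4 → ℤˣ) (s : Vtx m n) (σ : SConf m n) : ℝ :=
  (1 / 16 : ℝ) * ∏ i : Fin 4, (1 - ((ε i : ℤ) : ℝ) * ((σ (star m n s i) : ℤ) : ℝ))

/-- `I^ε_C(σ) = ∏_{s ∈ C} (I^ε_s(σ) + Ī^ε_s(σ))`: the indicator that around every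
vertex of `C` the spins all agree with `ε` or are all opposite. -/
noncomputable def IC (ε : Fin 4 → ℤˣ) (C : Finset (Vtx m n)) (σ : SConf m n) : ℝ :=
  ∏ s ∈ C, (Ifun m n ε s σ + Ibar m n ε s σ)

/-- `I^{ε,δ}_C(σ) = ∏_{s ∈ C} (I^ε_s(σ) + Ī^ε_s(σ) + I^δ_s(σ) + Ī^δ_s(σ))`. -/
noncomputable def IC2 (ε δ : Fin 4 → ℤˣ) (C : Finset (Vtx m n)) (σ : SConf m n) : ℝ :=
  ∏ s ∈ C, (Ifun m n ε s σ + Ibar m n ε s σ + Ifun m n δ s σ + Ibar m n δ s σ)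

section matrices2
variable [NeZero m] [NeZero n]

/-- The (diagonal) operator `Q^ε_C = ∏_{s ∈ C} (P^ε_s + P̄^ε_s)`, where
`P^ε_s = (1/16) ∏_i (1 + ε_i σ³_i(s))` and `P̄^ε_s = (1/16) ∏_i (1 - ε_i σ³_i(s))`. -/
noncomputable def Q (ε : Fin 4 → ℤˣ) (C : Finset (Vtx m n)) : Mat m n :=
  Matrix.diagonal (IC m n ε C)

/-- The (diagonal) operator `Q^{ε,δ}_C = ∏_{s ∈ C} (P^ε_s + P̄^ε_s + P^δ_s + P̄^δ_s)`. -/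
noncomputable def Q2 (ε δ : Fin 4 → ℤˣ) (C : Finset (Vtx m n)) : Mat m n :=
  Matrix.diagonal (IC2 m n ε δ C)

/-- Expectation `E_J[f]` under the four-body Ising measure
`P_J(σ) ∝ exp(∑_s J_s ∏_{e ∼ s} σ_e)`. -/
noncomputable def isingE (J : Vtx m n → ℝ) (f : SConf m n → ℝ) : ℝ :=
  (∑ σ : SConf m n, f σ *
      Real.exp (∑ s : Vtx m n, J s * (((∏ e ∈ starSet m n s, σ e : ℤˣ) : ℤ) : ℝ))) /
    (∑ σ : SConf m n,
      Real.exp (∑ s : Vtx m n, J s * (((∏ e ∈ starSet m n s, σ e : ℤˣ) : ℤ) : ℝ)))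

end matrices2

end Toric


open Toric Finset

namespace ToricAux
variable {m n : ℕ}

lemma one_ne (hm : 3 ≤ m) : (1 : ZMod m) ≠ 0 := by
  haveI : Fact (1 < m) := ⟨by omega⟩
  exact one_ne_zero

lemma mem_starSet_iff {s : Vtx m n} {e : Edge m n} :
    e ∈ starSet m n s ↔ e = (s, true) ∨ e = (s, false) ∨
      e = ((s.1 - 1, s.2), true) ∨ e = ((s.1, s.2 - 1), false) := by
  constructor
  · intro h
    obtain ⟨i, -, hi⟩ := Finset.mem_image.mp h
    fin_cases i <;> subst hi <;> tauto
  · intro h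
    refine Finset.mem_image.mpr ?_
    rcases h with rfl | rfl | rfl | rfl
    exacts [⟨0, Finset.mem_univ _, rfl⟩, ⟨1, Finset.mem_univ _, rfl⟩,
      ⟨2, Finset.mem_univ _, rfl⟩, ⟨3, Finset.mem_univ _, rfl⟩]

lemma mem_faceSet_iff {p : Vtx m n} {e : Edge m n} :
    e ∈ faceSet m n p ↔ e = (p, true) ∨ e = (p, false) ∨
      e = ((p.1, p.2 + 1), true) ∨ e = ((p.1 + 1, p.2), false) := by
  constructor
  · intro h
    obtain ⟨i, -, hi⟩ := Finset.mem_image.mp h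
    fin_cases i <;> subst hi <;> tauto
  · intro h
    refine Finset.mem_image.mpr ?_
    rcases h with rfl | rfl | rfl | rfl
    exacts [⟨0, Finset.mem_univ _, rfl⟩, ⟨1, Finset.mem_univ _, rfl⟩,
      ⟨2, Finset.mem_univ _, rfl⟩, ⟨3, Finset.mem_univ _, rfl⟩]

lemma mem_starSet_horiz {s v : Vtx m n} :
    ((v, true) : Edge m n) ∈ starSet m n s ↔ s = v ∨ s = (v.1 + 1, v.2) := by
  rw [mem_starSet_iff]
  constructor
  · rintro (h | h | h | h)
    · rw [Prod.mk.injEq] at h; exact Or.inl h.1.symm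
    · simp at h
    · rw [Prod.mk.injEq] at h
      obtain ⟨h1, -⟩ := h; subst h1
      exact Or.inr (Prod.ext (by simp) rfl)
    · simp at h
  · rintro (rfl | rfl)
    · exact Or.inl rfl
    · refine Or.inr (Or.inr (Or.inl ?_)); simp

lemma mem_starSet_vert {s v : Vtx m n} :
    ((v, false) : Edge m n) ∈ starSet m n s ↔ s = v ∨ s = (v.1, v.2 + 1) := by
  rw [mem_starSet_iff]
  constructor
  · rintro (h | h | h | h)
    · simp at h
    · rw [Prod.mk.injEq] at h; exact Or.inl h.1.symm
    · simp at h
    · rw [Prod.mk.injEq] at h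
      obtain ⟨h1, -⟩ := h; subst h1
      exact Or.inr (Prod.ext rfl (by simp))
  · rintro (rfl | rfl)
    · exact Or.inr (Or.inl rfl)
    · refine Or.inr (Or.inr (Or.inr ?_)); simp

lemma mem_faceSet_horiz {p v : Vtx m n} :
    ((v, true) : Edge m n) ∈ faceSet m n p ↔ p = v ∨ p = (v.1, v.2 - 1) := by
  rw [mem_faceSet_iff]
  constructor
  · rintro (h | h | h | h)
    · rw [Prod.mk.injEq] at h; exact Or.inl h.1.symm
    · simp at h
    · rw [Prod.mk.injEq] at h
      obtain ⟨h1, -⟩ := h; subst h1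
      exact Or.inr (Prod.ext rfl (by simp))
    · simp at h
  · rintro (rfl | rfl)
    · exact Or.inl rfl
    · refine Or.inr (Or.inr (Or.inl ?_)); simp

lemma mem_faceSet_vert {p v : Vtx m n} :
    ((v, false) : Edge m n) ∈ faceSet m n p ↔ p = v ∨ p = (v.1 - 1, v.2) := by
  rw [mem_faceSet_iff]
  constructor
  · rintro (h | h | h | h)
    · simp at h
    · rw [Prod.mk.injEq] at h; exact Or.inl h.1.symm
    · simp at h
    · rw [Prod.mk.injEq] at h
      obtain ⟨h1, -⟩ := h; subst h1
      exact Or.inr (Prod.ext (by simp) rfl)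
  · rintro (rfl | rfl)
    · exact Or.inr (Or.inl rfl)
    · refine Or.inr (Or.inr (Or.inr ?_)); simp

-- distinctness of the four points around a vertex
lemma d12 (hn : 3 ≤ n) (s : Vtx m n) : s ≠ (s.1, s.2 - 1) := by
  intro h
  have h2 := (congrArg Prod.snd h).symm
  exact one_ne hn (sub_eq_self.mp h2)

lemma d13 (hm : 3 ≤ m) (s : Vtx m n) : s ≠ (s.1 - 1, s.2) := by
  intro h
  have h2 := (congrArg Prod.fst h).symm
  exact one_ne hm (sub_eq_self.mp h2)

lemma star_injective (hm : 3 ≤ m) (hn : 3 ≤ n) (s : Vtx m n) :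
    Function.Injective (Toric.star m n s) := by
  have h1 : s.1 - 1 ≠ s.1 := fun h => one_ne hm (sub_eq_self.mp h)
  have h2 : s.2 - 1 ≠ s.2 := fun h => one_ne hn (sub_eq_self.mp h)
  intro i j hij
  fin_cases i <;> fin_cases j <;>
    simp_all [Toric.star, Prod.ext_iff] <;> first | rfl | exact h1 (sub_eq_self.mp hij.symm) | exact h2 (sub_eq_self.mp hij.symm)

lemma prod_starSet {M : Type*} [CommMonoid M] (hm : 3 ≤ m) (hn : 3 ≤ n)
    (s : Vtx m n) (f : Edge m n → M) :
    ∏ e ∈ starSet m n s, f e = ∏ i : Fin 4, f (Toric.star m n s i) :=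
  Finset.prod_image fun i _ j _ h => star_injective hm hn s h

lemma prod_pair_ite {M : Type*} [CommMonoid M] (c : M) {a b : Vtx m n} (hab : a ≠ b)
    (B : Finset (Vtx m n)) :
    ∏ s ∈ B, (if s = a ∨ s = b then c else 1) =
      (if a ∈ B then c else 1) * (if b ∈ B then c else 1) := by
  have : ∀ s : Vtx m n, (if s = a ∨ s = b then c else 1) =
      (if s = a then c else 1) * (if s = b then c else 1) := by
    intro s
    by_cases h1 : s = a
    · subst h1
      simp [hab]
    · by_cases h2 : s = b <;> simp [h1, h2, Ne.symm hab]
  rw [Finset.prod_congr rfl fun s _ => this s, Finset.prod_mul_distrib,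
    Finset.prod_ite_eq' B a fun _ => c, Finset.prod_ite_eq' B b fun _ => c]

/-- Key commutation input: the spins of `xconf p` multiply to `1` around any star. -/
lemma prod_xconf_starSet (hm : 3 ≤ m) (hn : 3 ≤ n) (p s : Vtx m n) :
    ∏ e ∈ starSet m n s, xconf m n p e = 1 := by
  have n12 : s ≠ ((s.1, s.2 - 1) : Vtx m n) :=
    fun h => one_ne hn (sub_eq_self.mp (congrArg Prod.snd h).symm)
  have n13 : s ≠ ((s.1 - 1, s.2) : Vtx m n) :=
    fun h => one_ne hm (sub_eq_self.mp (congrArg Prod.fst h).symm)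
  have n14 : s ≠ ((s.1 - 1, s.2 - 1) : Vtx m n) :=
    fun h => one_ne hm (sub_eq_self.mp (congrArg Prod.fst h).symm)
  have n23 : ((s.1, s.2 - 1) : Vtx m n) ≠ (s.1 - 1, s.2) :=
    fun h => one_ne hm (sub_eq_self.mp (congrArg Prod.fst h).symm)
  have n24 : ((s.1, s.2 - 1) : Vtx m n) ≠ (s.1 - 1, s.2 - 1) :=
    fun h => one_ne hm (sub_eq_self.mp (congrArg Prod.fst h).symm)
  have n34 : ((s.1 - 1, s.2) : Vtx m n) ≠ (s.1 - 1, s.2 - 1) :=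
    fun h => one_ne hn (sub_eq_self.mp (congrArg Prod.snd h).symm)
  rw [prod_starSet hm hn, Fin.prod_univ_four]
  have e0 : Toric.star m n s 0 = (s, true) := rfl
  have e1 : Toric.star m n s 1 = (s, false) := rfl
  have e2 : Toric.star m n s 2 = ((s.1 - 1, s.2), true) := rfl
  have e3 : Toric.star m n s 3 = ((s.1, s.2 - 1), false) := rfl
  rw [e0, e1, e2, e3]
  simp only [xconf]
  rw [if_congr (mem_faceSet_horiz (v := s)) rfl rfl,
    if_congr (mem_faceSet_vert (v := s)) rfl rfl,
    if_congr (mem_faceSet_horiz (v := ((s.1 - 1, s.2) : Vtx m n))) rfl rfl,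
    if_congr (mem_faceSet_vert (v := ((s.1, s.2 - 1) : Vtx m n))) rfl rfl]
  by_cases h1 : p = s
  · rw [if_pos (Or.inl h1), if_pos (Or.inl h1),
      if_neg (by rintro (h | h); exacts [n13 (h1.symm.trans h), n14 (h1.symm.trans h)]),
      if_neg (by rintro (h | h); exacts [n12 (h1.symm.trans h), n14 (h1.symm.trans h)])]
    decide
  · by_cases h2 : p = ((s.1, s.2 - 1) : Vtx m n)
    · rw [if_pos (Or.inr h2),
        if_neg (by rintro (h | h); exacts [h1 h, n23 (h2.symm.trans h)]),
        if_neg (by rintro (h | h); exacts [n23 (h2.symm.trans h), n24 (h2.symm.trans h)]),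
        if_pos (Or.inl h2)]
      decide
    · by_cases h3 : p = ((s.1 - 1, s.2) : Vtx m n)
      · rw [if_neg (by rintro (h | h); exacts [h1 h, h2 h]),
          if_pos (Or.inr h3),
          if_pos (Or.inl h3),
          if_neg (by rintro (h | h); exacts [h2 h, n34 (h3.symm.trans h)])]
        decide
      · by_cases h4 : p = ((s.1 - 1, s.2 - 1) : Vtx m n)
        · rw [if_neg (by rintro (h | h); exacts [h1 h, h2 h]),
            if_neg (by rintro (h | h); exacts [h1 h, h3 h]),
            if_pos (Or.inr h4),
            if_pos (Or.inr h4)]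
          decide
        · rw [if_neg (by rintro (h | h); exacts [h1 h, h2 h]),
            if_neg (by rintro (h | h); exacts [h1 h, h3 h]),
            if_neg (by rintro (h | h); exacts [h3 h, h4 h]),
            if_neg (by rintro (h | h); exacts [h2 h, h4 h])]
          decide
end ToricAux


open Toric Finset

namespace ToricAux
variable {m n : ℕ}

/-- Shift-closure: a subset of the torus closed under both unit shifts is `∅` or `univ`. -/
lemma shift_closure [NeZero m] [NeZero n] {B : Finset (Vtx m n)}
    (h1 : ∀ v : Vtx m n, v ∈ B ↔ ((v.1 + 1, v.2) : Vtx m n) ∈ B)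
    (h2 : ∀ v : Vtx m n, v ∈ B ↔ ((v.1, v.2 + 1) : Vtx m n) ∈ B) :
    B = ∅ ∨ B = Finset.univ := by
  rcases B.eq_empty_or_nonempty with h | ⟨a, ha⟩
  · exact Or.inl h
  right
  have key1 : ∀ (k : ℕ) (v : Vtx m n), v ∈ B → ((v.1 + k, v.2) : Vtx m n) ∈ B := by
    intro k
    induction k with
    | zero => intro v hv; simpa using hv
    | succ k ih =>
      intro v hv
      have := (h1 ((v.1 + k, v.2) : Vtx m n)).mp (ih v hv)
      simpa [add_assoc] using this
  have key2 : ∀ (k : ℕ) (v : Vtx m n), v ∈ B → ((v.1, v.2 + k) : Vtx m n) ∈ B := by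
    intro k
    induction k with
    | zero => intro v hv; simpa using hv
    | succ k ih =>
      intro v hv
      have := (h2 ((v.1, v.2 + k) : Vtx m n)).mp (ih v hv)
      simpa [add_assoc] using this
  apply Finset.eq_univ_of_forall
  intro t
  have hb := key2 ((t.2 - a.2).val) _ (key1 ((t.1 - a.1).val) a ha)
  have e1 : a.1 + (((t.1 - a.1).val : ℕ) : ZMod m) = t.1 := by
    rw [ZMod.natCast_zmod_val]; ring
  have e2 : a.2 + (((t.2 - a.2).val : ℕ) : ZMod n) = t.2 := by
    rw [ZMod.natCast_zmod_val]; ring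
  have : (((a.1 + ((t.1 - a.1).val : ℕ) : ZMod m), (a.2 + ((t.2 - a.2).val : ℕ) : ZMod n)) : Vtx m n) = t :=
    Prod.ext e1 e2
  rwa [this] at hb

end ToricAux


open Toric Finset

namespace ToricAux
variable {m n : ℕ}

lemma ite_mul_ite_eq_one_iff {a b : Prop} [Decidable a] [Decidable b] :
    ((if a then (-1 : ℤˣ) else 1) * (if b then (-1 : ℤˣ) else 1) = 1) ↔ (a ↔ b) := by
  by_cases ha : a <;> by_cases hb : b <;> simp [ha, hb]

lemma prod_apply_sconf (T : Finset (Vtx m n)) (f : Vtx m n → SConf m n) (e : Edge m n) :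
    (∏ p ∈ T, f p) e = ∏ p ∈ T, f p e := by
  simpa using Finset.prod_apply e T f

lemma prod_xconf_horiz (hm : 3 ≤ m) (hn : 3 ≤ n) (T : Finset (Vtx m n)) (v : Vtx m n) :
    (∏ p ∈ T, xconf m n p) ((v, true) : Edge m n) =
      (if v ∈ T then (-1 : ℤˣ) else 1) * (if ((v.1, v.2 - 1) : Vtx m n) ∈ T then (-1 : ℤˣ) else 1) := by
  rw [prod_apply_sconf]
  have : ∀ p ∈ T, xconf m n p ((v, true) : Edge m n) =
      (if p = v ∨ p = ((v.1, v.2 - 1) : Vtx m n) then (-1 : ℤˣ) else 1) := by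
    intro p _
    simp only [xconf]
    exact if_congr mem_faceSet_horiz rfl rfl
  rw [Finset.prod_congr rfl this,
    prod_pair_ite (-1 : ℤˣ) (fun h => one_ne hn (sub_eq_self.mp (congrArg Prod.snd h).symm)) T]

lemma prod_xconf_vert (hm : 3 ≤ m) (hn : 3 ≤ n) (T : Finset (Vtx m n)) (v : Vtx m n) :
    (∏ p ∈ T, xconf m n p) ((v, false) : Edge m n) =
      (if v ∈ T then (-1 : ℤˣ) else 1) * (if ((v.1 - 1, v.2) : Vtx m n) ∈ T then (-1 : ℤˣ) else 1) := by
  rw [prod_apply_sconf]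
  have : ∀ p ∈ T, xconf m n p ((v, false) : Edge m n) =
      (if p = v ∨ p = ((v.1 - 1, v.2) : Vtx m n) then (-1 : ℤˣ) else 1) := by
    intro p _
    simp only [xconf]
    exact if_congr mem_faceSet_vert rfl rfl
  rw [Finset.prod_congr rfl this,
    prod_pair_ite (-1 : ℤˣ) (fun h => one_ne hm (sub_eq_self.mp (congrArg Prod.fst h).symm)) T]

lemma xconf_prod_eq_one_iff [NeZero m] [NeZero n] (hm : 3 ≤ m) (hn : 3 ≤ n)
    (T : Finset (Vtx m n)) :
    (∏ p ∈ T, xconf m n p) = 1 ↔ T = ∅ ∨ T = Finset.univ := by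
  constructor
  · intro h
    apply shift_closure
    · intro v
      have hv := congrFun h (((v.1 + 1, v.2), false) : Edge m n)
      rw [prod_xconf_vert hm hn T ((v.1 + 1, v.2) : Vtx m n)] at hv
      simp only [add_sub_cancel_right] at hv
      have := ite_mul_ite_eq_one_iff.mp (by simpa using hv)
      exact ⟨fun hh => this.mpr (by simpa using hh), fun hh => by simpa using this.mp hh⟩
    · intro v
      have hv := congrFun h (((v.1, v.2 + 1), true) : Edge m n)
      rw [prod_xconf_horiz hm hn T ((v.1, v.2 + 1) : Vtx m n)] at hv
      simp only [add_sub_cancel_right] at hv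
      have := ite_mul_ite_eq_one_iff.mp (by simpa using hv)
      exact ⟨fun hh => this.mpr (by simpa using hh), fun hh => by simpa using this.mp hh⟩
  · rintro (rfl | rfl)
    · simp
    · funext e
      rcases e with ⟨v, b⟩
      cases b
      · rw [prod_xconf_vert hm hn Finset.univ v]
        simp [Pi.one_apply]
      · rw [prod_xconf_horiz hm hn Finset.univ v]
        simp [Pi.one_apply]

end ToricAux


open Toric Finset

namespace ToricAux
variable {m n : ℕ}

lemma card_sconf [NeZero m] [NeZero n] : Fintype.card (SConf m n) = 2 ^ (2 * m * n) := by
  have h1 : Fintype.card ℤˣ = 2 := by decide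
  have h2 : Fintype.card (Edge m n) = m * n * 2 := by
    simp [Fintype.card_prod, ZMod.card]
  rw [Fintype.card_fun, h1, h2]
  ring

/-- flip of a single edge -/
def flip (e0 : Edge m n) : SConf m n := fun e => if e = e0 then -1 else 1

lemma zval_flip (e0 : Edge m n) (s : Vtx m n) :
    ∏ e ∈ starSet m n s, flip e0 e = if e0 ∈ starSet m n s then (-1 : ℤˣ) else 1 := by
  simpa [flip] using Finset.prod_ite_eq' (starSet m n s) e0 (fun _ => (-1 : ℤˣ))

lemma chi_flip_horiz (hm : 3 ≤ m) (B : Finset (Vtx m n)) (v : Vtx m n) :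
    ∏ s ∈ B, ∏ e ∈ starSet m n s, flip ((v, true) : Edge m n) e =
      (if v ∈ B then (-1 : ℤˣ) else 1) * (if ((v.1 + 1, v.2) : Vtx m n) ∈ B then (-1 : ℤˣ) else 1) := by
  have : ∀ s ∈ B, ∏ e ∈ starSet m n s, flip ((v, true) : Edge m n) e =
      (if s = v ∨ s = ((v.1 + 1, v.2) : Vtx m n) then (-1 : ℤˣ) else 1) := by
    intro s _
    rw [zval_flip]
    exact if_congr mem_starSet_horiz rfl rfl
  rw [Finset.prod_congr rfl this,
    prod_pair_ite (-1 : ℤˣ) (fun h => one_ne hm (left_eq_add.mp (congrArg Prod.fst h))) B]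

lemma chi_flip_vert (hn : 3 ≤ n) (B : Finset (Vtx m n)) (v : Vtx m n) :
    ∏ s ∈ B, ∏ e ∈ starSet m n s, flip ((v, false) : Edge m n) e =
      (if v ∈ B then (-1 : ℤˣ) else 1) * (if ((v.1, v.2 + 1) : Vtx m n) ∈ B then (-1 : ℤˣ) else 1) := by
  have : ∀ s ∈ B, ∏ e ∈ starSet m n s, flip ((v, false) : Edge m n) e =
      (if s = v ∨ s = ((v.1, v.2 + 1) : Vtx m n) then (-1 : ℤˣ) else 1) := by
    intro s _
    rw [zval_flip]
    exact if_congr mem_starSet_vert rfl rfl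
  rw [Finset.prod_congr rfl this,
    prod_pair_ite (-1 : ℤˣ) (fun h => one_ne hn (left_eq_add.mp (congrArg Prod.snd h))) B]

lemma ite_mul_ite_eq_neg_one {a b : Prop} [Decidable a] [Decidable b] (h : ¬ (a ↔ b)) :
    (if a then (-1 : ℤˣ) else 1) * (if b then (-1 : ℤˣ) else 1) = -1 := by
  by_cases ha : a <;> by_cases hb : b <;> simp [ha, hb] at h ⊢ <;> tauto

/-- if `B` is neither `∅` nor `univ`, some single-edge flip has odd star overlap with `B`. -/
lemma exists_flip [NeZero m] [NeZero n] (hm : 3 ≤ m) (hn : 3 ≤ n) {B : Finset (Vtx m n)}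
    (h0 : B ≠ ∅) (h1 : B ≠ Finset.univ) :
    ∃ τ : SConf m n, ∏ s ∈ B, ∏ e ∈ starSet m n s, τ e = (-1 : ℤˣ) := by
  by_contra hc
  push_neg at hc
  have key1 : ∀ v : Vtx m n, v ∈ B ↔ ((v.1 + 1, v.2) : Vtx m n) ∈ B := by
    intro v; by_contra hiff
    exact hc _ ((chi_flip_horiz hm B v).trans (ite_mul_ite_eq_neg_one hiff))
  have key2 : ∀ v : Vtx m n, v ∈ B ↔ ((v.1, v.2 + 1) : Vtx m n) ∈ B := by
    intro v; by_contra hiff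
    exact hc _ ((chi_flip_vert hn B v).trans (ite_mul_ite_eq_neg_one hiff))
  rcases shift_closure key1 key2 with rfl | rfl
  · exact h0 rfl
  · exact h1 rfl

end ToricAux


open Toric Finset

namespace ToricAux
variable {m n : ℕ}

lemma star_chi_univ [NeZero m] [NeZero n] (hm : 3 ≤ m) (hn : 3 ≤ n) (ω : SConf m n) :
    ∏ s : Vtx m n, ∏ e ∈ starSet m n s, ω e = 1 := by
  have expand : ∀ s : Vtx m n, ∏ e ∈ starSet m n s, ω e =
      ω ((s, true) : Edge m n) * ω ((s, false) : Edge m n) *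
        (ω (((s.1 - 1, s.2), true) : Edge m n) * ω (((s.1, s.2 - 1), false) : Edge m n)) := by
    intro s
    rw [prod_starSet hm hn, Fin.prod_univ_four]
    have e0 : Toric.star m n s 0 = (s, true) := rfl
    have e1 : Toric.star m n s 1 = (s, false) := rfl
    have e2 : Toric.star m n s 2 = ((s.1 - 1, s.2), true) := rfl
    have e3 : Toric.star m n s 3 = ((s.1, s.2 - 1), false) := rfl
    rw [e0, e1, e2, e3, mul_assoc]
  rw [Finset.prod_congr rfl fun s _ => expand s]
  rw [Finset.prod_mul_distrib, Finset.prod_mul_distrib, Finset.prod_mul_distrib]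
  have h3 : ∏ s : Vtx m n, ω (((s.1 - 1, s.2), true) : Edge m n) =
      ∏ s : Vtx m n, ω ((s, true) : Edge m n) := by
    apply Fintype.prod_equiv ((Equiv.subRight (1 : ZMod m)).prodCongr (Equiv.refl (ZMod n)))
    intro x
    rfl
  have h4 : ∏ s : Vtx m n, ω (((s.1, s.2 - 1), false) : Edge m n) =
      ∏ s : Vtx m n, ω ((s, false) : Edge m n) := by
    apply Fintype.prod_equiv ((Equiv.refl (ZMod m)).prodCongr (Equiv.subRight (1 : ZMod n)))
    intro x
    rfl
  rw [h3, h4, mul_mul_mul_comm]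
  rw [Int.units_mul_self, Int.units_mul_self, one_mul]

lemma sum_chi [NeZero m] [NeZero n] (hm : 3 ≤ m) (hn : 3 ≤ n) (B : Finset (Vtx m n)) :
    ∑ ω : SConf m n, (((∏ s ∈ B, ∏ e ∈ starSet m n s, ω e : ℤˣ) : ℤ) : ℝ) =
      if B = ∅ ∨ B = Finset.univ then (2 : ℝ) ^ (2 * m * n) else 0 := by
  by_cases hB : B = ∅ ∨ B = Finset.univ
  · rw [if_pos hB]
    have hone : ∀ ω : SConf m n, (∏ s ∈ B, ∏ e ∈ starSet m n s, ω e : ℤˣ) = 1 := by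
      rcases hB with rfl | rfl
      · intro ω; simp
      · intro ω; exact star_chi_univ hm hn ω
    calc ∑ ω : SConf m n, (((∏ s ∈ B, ∏ e ∈ starSet m n s, ω e : ℤˣ) : ℤ) : ℝ)
        = ∑ _ω : SConf m n, (1 : ℝ) :=
          Finset.sum_congr rfl fun ω _ => by rw [hone ω]; norm_num
      _ = (2 : ℝ) ^ (2 * m * n) := by
          rw [Finset.sum_const, Finset.card_univ, card_sconf]; simp
  · rw [if_neg hB]
    push_neg at hB
    obtain ⟨τ, hτ⟩ := exists_flip hm hn hB.1.ne_empty hB.2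
    set f : SConf m n → ℝ := fun ω => (((∏ s ∈ B, ∏ e ∈ starSet m n s, ω e : ℤˣ) : ℤ) : ℝ) with hf
    have hmul : ∀ ω : SConf m n, f (τ * ω) = f τ * f ω := by
      intro ω
      simp only [hf, Pi.mul_apply, Finset.prod_mul_distrib]
      push_cast
      ring
    have hbij : ∑ ω : SConf m n, f (τ * ω) = ∑ ω : SConf m n, f ω :=
      Fintype.sum_bijective (fun ω => τ * ω) (Group.mulLeft_bijective τ) _ _ (fun ω => rfl)
    have hτr : f τ = -1 := by
      show (((∏ s ∈ B, ∏ e ∈ starSet m n s, τ e : ℤˣ) : ℤ) : ℝ) = -1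
      rw [hτ]; norm_num
    have : ∑ ω : SConf m n, f ω = -∑ ω : SConf m n, f ω := by
      calc ∑ ω : SConf m n, f ω = ∑ ω : SConf m n, f (τ * ω) := hbij.symm
        _ = ∑ ω : SConf m n, f τ * f ω := Finset.sum_congr rfl fun ω _ => hmul ω
        _ = f τ * ∑ ω : SConf m n, f ω := by rw [Finset.mul_sum]
        _ = -∑ ω : SConf m n, f ω := by rw [hτr]; ring
    linarith
end ToricAux


open Toric Finset

namespace ToricAux
variable {m n : ℕ}

section matA
variable [NeZero m] [NeZero n]

/-- permutation matrix of translation by `g` -/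
def Pm (g : SConf m n) : Mat m n := fun τ ω => if τ = g * ω then 1 else 0

lemma X_eq_Pm (p : Vtx m n) : X m n p = Pm (xconf m n p) := rfl

lemma XProd_eq_Pm (C : Finset (Vtx m n)) : XProd m n C = Pm (∏ p ∈ C, xconf m n p) := rfl

lemma sconf_mul_self (g : SConf m n) : g * g = 1 :=
  funext fun e => Int.units_mul_self (g e)

lemma Pm_one : Pm (1 : SConf m n) = (1 : Mat m n) := by
  funext τ ω
  simp [Pm, Matrix.one_apply, eq_comm]

lemma Pm_mul (g h : SConf m n) : Pm g * Pm h = Pm (g * h) := by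
  funext τ ω
  rw [Matrix.mul_apply]
  simp only [Pm]
  rw [Finset.sum_eq_single (h * ω)]
  · simp [mul_assoc]
  · intro ρ _ hρ
    simp [if_neg hρ]
  · simp

lemma Pm_commute (g h : SConf m n) : Commute (Pm g) (Pm h) := by
  unfold Commute SemiconjBy
  rw [Pm_mul, Pm_mul, mul_comm]

lemma Pm_sq (g : SConf m n) : Pm g * Pm g = 1 := by
  rw [Pm_mul, sconf_mul_self, Pm_one]

lemma Pm_diag (g : SConf m n) (ω : SConf m n) :
    Pm g ω ω = if g = 1 then (1 : ℝ) else 0 := by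
  simp only [Pm]
  exact if_congr right_eq_mul rfl rfl

lemma Pm_commute_diag (g : SConf m n) (d : SConf m n → ℝ) (hd : ∀ ω, d (g * ω) = d ω) :
    Commute (Pm g) (Matrix.diagonal d) := by
  unfold Commute SemiconjBy
  funext τ ω
  rw [Matrix.mul_diagonal, Matrix.diagonal_mul]
  simp only [Pm]
  by_cases h : τ = g * ω
  · subst h
    rw [if_pos rfl, hd ω]
    ring
  · rw [if_neg h]
    ring

lemma commute_X_Z (hm : 3 ≤ m) (hn : 3 ≤ n) (p s : Vtx m n) :
    Commute (X m n p) (Z m n s) := by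
  rw [X_eq_Pm]
  show Commute _ (Matrix.diagonal _)
  apply Pm_commute_diag
  intro ω
  have : (∏ e ∈ starSet m n s, (xconf m n p * ω) e) = ∏ e ∈ starSet m n s, ω e := by
    simp only [Pi.mul_apply]
    rw [Finset.prod_mul_distrib, prod_xconf_starSet hm hn p s, one_mul]
  rw [this]

end matA

/-- abstract: exponential of a scalar multiple of an involution -/
theorem exp_smul_involution {𝔸 : Type*} [NormedRing 𝔸] [NormedAlgebra ℝ 𝔸] [CompleteSpace 𝔸]
    {A : 𝔸} (h : A * A = 1) (c : ℝ) :
    NormedSpace.exp (c • A) = Real.cosh c • (1 : 𝔸) + Real.sinh c • A := by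
  rw [NormedSpace.exp_eq_tsum ℝ]
  refine HasSum.tsum_eq ?_
  have hA2 : ∀ k : ℕ, A ^ (2 * k) = 1 := fun k => by
    rw [pow_mul, sq, h, one_pow]
  have hodd : ∀ k : ℕ, A ^ (2 * k + 1) = A := fun k => by
    rw [pow_succ, hA2, one_mul]
  refine HasSum.even_add_odd ?_ ?_
  · have hc := (Real.hasSum_cosh c).smul_const (1 : 𝔸)
    convert hc using 1
    funext k
    rw [smul_pow, hA2, smul_smul]
    congr 1
    rw [div_eq_mul_inv, mul_comm]
  · have hs := (Real.hasSum_sinh c).smul_const A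
    convert hs using 1
    funext k
    rw [smul_pow, hodd, smul_smul]
    congr 1
    rw [div_eq_mul_inv, mul_comm]

section matB
variable [NeZero m] [NeZero n]

theorem matrix_exp_smul_involution {A : Mat m n} (h : A * A = 1) (c : ℝ) :
    NormedSpace.exp (c • A) = Real.cosh c • (1 : Mat m n) + Real.sinh c • A := by
  letI : SeminormedRing (Mat m n) := Matrix.linftyOpSemiNormedRing
  letI : NormedRing (Mat m n) := Matrix.linftyOpNormedRing
  letI : NormedAlgebra ℝ (Mat m n) := Matrix.linftyOpNormedAlgebra
  exact exp_smul_involution h c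

theorem exp_sum_X (hm : 3 ≤ m) (hn : 3 ≤ n) (Jx : Vtx m n → ℝ) (s : Finset (Vtx m n)) :
    NormedSpace.exp (∑ p ∈ s, Jx p • X m n p) =
      ∑ T ∈ s.powerset,
        ((∏ p ∈ T, Real.sinh (Jx p)) * ∏ p ∈ s \ T, Real.cosh (Jx p)) • XProd m n T := by
  classical
  induction s using Finset.induction_on with
  | empty =>
    rw [Finset.sum_empty, NormedSpace.exp_zero, Finset.powerset_empty, Finset.sum_singleton,
      XProd_eq_Pm]
    simp [Pm_one]
  | @insert q s hq ih =>
    have hcomm : Commute (Jx q • X m n q) (∑ p ∈ s, Jx p • X m n p) := by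
      refine Commute.sum_right _ _ _ fun p _ => ?_
      have c : Commute (X m n q) (X m n p) := by
        rw [X_eq_Pm, X_eq_Pm]; exact Pm_commute _ _
      exact (c.smul_right (Jx p)).smul_left (Jx q)
    rw [Finset.sum_insert hq, Matrix.exp_add_of_commute _ _ hcomm,
      matrix_exp_smul_involution (by rw [X_eq_Pm, Pm_sq]) (Jx q), ih,
      Finset.sum_powerset_insert hq]
    rw [add_mul, smul_mul_assoc, one_mul, Finset.smul_sum, Finset.mul_sum]
    congr 1
    · refine Finset.sum_congr rfl fun T hT => ?_
      rw [smul_smul]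
      congr 1
      have hds : insert q s \ T = insert q (s \ T) :=
        Finset.insert_sdiff_of_notMem _ fun hqT => hq (Finset.mem_powerset.mp hT hqT)
      rw [hds, Finset.prod_insert (fun hh => hq (Finset.mem_sdiff.mp hh).1)]
      ring
    · refine Finset.sum_congr rfl fun T hT => ?_
      have hqT : q ∉ T := fun hqT => hq (Finset.mem_powerset.mp hT hqT)
      have hX : X m n q * XProd m n T = XProd m n (insert q T) := by
        rw [X_eq_Pm, XProd_eq_Pm, XProd_eq_Pm, Pm_mul, Finset.prod_insert hqT]
      rw [smul_mul_smul_comm, hX]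
      congr 1
      have hds : insert q s \ insert q T = s \ T := by
        ext x
        simp only [Finset.mem_sdiff, Finset.mem_insert, not_or]
        constructor
        · rintro ⟨hx | hx, hq', hT'⟩
          · exact absurd hx hq'
          · exact ⟨hx, hT'⟩
        · rintro ⟨hx, hT'⟩
          exact ⟨Or.inr hx, fun hh => hq (hh ▸ hx), hT'⟩
      rw [hds, Finset.prod_insert hqT]
      ring
end matB
end ToricAux


open Toric Finset

namespace ToricAux
variable {m n : ℕ} [NeZero m] [NeZero n]

lemma exp_J_z (J : ℝ) (u : ℤˣ) :
    Real.exp (J * ((u : ℤ) : ℝ)) = ((u : ℤ) : ℝ) * Real.sinh J + Real.cosh J := by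
  rcases Int.units_eq_one_or u with rfl | rfl
  · push_cast
    rw [mul_one, ← Real.cosh_add_sinh]; ring
  · push_cast
    rw [mul_neg_one, ← Real.cosh_sub_sinh]
    ring

lemma cast_prod_units {ι : Type*} (B : Finset ι) (f : ι → ℤˣ) :
    (((∏ i ∈ B, f i : ℤˣ) : ℤ) : ℝ) = ∏ i ∈ B, ((f i : ℤ) : ℝ) := by
  have h1 : ((∏ i ∈ B, f i : ℤˣ) : ℤ) = ∏ i ∈ B, ((f i : ℤ)) := map_prod (Units.coeHom ℤ) f B
  rw [h1, Int.cast_prod]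

lemma sum_exp_z (hm : 3 ≤ m) (hn : 3 ≤ n) (Jz : Vtx m n → ℝ) :
    (∑ ω : SConf m n,
        Real.exp (∑ s : Vtx m n, Jz s * (((∏ e ∈ starSet m n s, ω e : ℤˣ) : ℤ) : ℝ))) =
      (2 : ℝ) ^ (2 * m * n) *
        ((∏ s : Vtx m n, Real.cosh (Jz s)) + ∏ s : Vtx m n, Real.sinh (Jz s)) := by
  classical
  have step1 : ∀ ω : SConf m n,
      Real.exp (∑ s : Vtx m n, Jz s * (((∏ e ∈ starSet m n s, ω e : ℤˣ) : ℤ) : ℝ)) =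
        ∑ B ∈ (Finset.univ : Finset (Vtx m n)).powerset,
          (((∏ s ∈ B, ∏ e ∈ starSet m n s, ω e : ℤˣ) : ℤ) : ℝ) *
            ((∏ s ∈ B, Real.sinh (Jz s)) * ∏ s ∈ Finset.univ \ B, Real.cosh (Jz s)) := by
    intro ω
    rw [Real.exp_sum]
    have : ∀ s ∈ (Finset.univ : Finset (Vtx m n)),
        Real.exp (Jz s * (((∏ e ∈ starSet m n s, ω e : ℤˣ) : ℤ) : ℝ)) =
          (((∏ e ∈ starSet m n s, ω e : ℤˣ) : ℤ) : ℝ) * Real.sinh (Jz s) + Real.cosh (Jz s) :=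
      fun s _ => exp_J_z (Jz s) _
    rw [Finset.prod_congr rfl this, Finset.prod_add]
    refine Finset.sum_congr rfl fun B _ => ?_
    rw [Finset.prod_mul_distrib, cast_prod_units]
    ring
  rw [Finset.sum_congr rfl fun ω _ => step1 ω, Finset.sum_comm]
  have step2 : ∀ B ∈ (Finset.univ : Finset (Vtx m n)).powerset,
      (∑ ω : SConf m n,
        (((∏ s ∈ B, ∏ e ∈ starSet m n s, ω e : ℤˣ) : ℤ) : ℝ) *
          ((∏ s ∈ B, Real.sinh (Jz s)) * ∏ s ∈ Finset.univ \ B, Real.cosh (Jz s))) =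
      (if B = ∅ then (2 : ℝ) ^ (2 * m * n) * ∏ s : Vtx m n, Real.cosh (Jz s) else 0) +
      (if B = Finset.univ then (2 : ℝ) ^ (2 * m * n) * ∏ s : Vtx m n, Real.sinh (Jz s)
        else 0) := by
    intro B _
    rw [← Finset.sum_mul, sum_chi hm hn B]
    by_cases h0 : B = ∅
    · subst h0
      have hne : (∅ : Finset (Vtx m n)) ≠ Finset.univ :=
        Finset.univ_nonempty.ne_empty.symm
      rw [if_pos (Or.inl rfl), if_pos rfl, if_neg hne]
      simp
    · by_cases h1 : B = Finset.univ
      · subst h1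
        rw [if_pos (Or.inr rfl), if_neg h0, if_pos rfl]
        simp
      · rw [if_neg (by tauto), if_neg h0, if_neg h1]
        simp
  rw [Finset.sum_congr rfl step2, Finset.sum_add_distrib,
    Finset.sum_ite_eq' _ (∅ : Finset (Vtx m n)) _,
    Finset.sum_ite_eq' _ (Finset.univ : Finset (Vtx m n)) _,
    if_pos (Finset.empty_mem_powerset _), if_pos (Finset.mem_powerset_self _)]
  ring
end ToricAux


open Toric Finset

namespace ToricAux
variable {m n : ℕ} [NeZero m] [NeZero n]

theorem main (hm : 3 ≤ m) (hn : 3 ≤ n) (Jx Jz : Toric.Vtx m n → ℝ) :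
    (Toric.mexp m n (-Toric.H m n Jx Jz)).trace =
      2 ^ (2 * m * n) *
        ((∏ s : Toric.Vtx m n, Real.cosh (Jz s)) +
          ∏ s : Toric.Vtx m n, Real.sinh (Jz s)) *
        ((∏ p : Toric.Vtx m n, Real.cosh (Jx p)) +
          ∏ p : Toric.Vtx m n, Real.sinh (Jx p)) := by
  classical
  set D : SConf m n → ℝ :=
    fun ω => ∑ s : Vtx m n, Jz s * (((∏ e ∈ starSet m n s, ω e : ℤˣ) : ℤ) : ℝ) with hD
  -- the Z-part is diagonal
  have hZdiag : (∑ s : Vtx m n, Jz s • Z m n s) = Matrix.diagonal D := by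
    funext τ ω
    by_cases h : τ = ω
    · subst h
      rw [Matrix.sum_apply, Matrix.diagonal_apply_eq]
      rw [hD]
      refine Finset.sum_congr rfl fun s _ => ?_
      rw [Matrix.smul_apply, Z, Matrix.diagonal_apply_eq]
      simp
    · rw [Matrix.sum_apply, Matrix.diagonal_apply_ne _ h]
      refine Finset.sum_eq_zero fun s _ => ?_
      rw [Matrix.smul_apply, Z, Matrix.diagonal_apply_ne _ h]
      simp
  -- split the Hamiltonian
  have hH : -Toric.H m n Jx Jz =
      (∑ p : Vtx m n, Jx p • X m n p) + ∑ s : Vtx m n, Jz s • Z m n s := by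
    rw [Toric.H]
    abel
  have hcomm : Commute (∑ p : Vtx m n, Jx p • X m n p) (∑ s : Vtx m n, Jz s • Z m n s) := by
    refine Commute.sum_left _ _ _ fun p _ => Commute.sum_right _ _ _ fun s _ => ?_
    exact ((commute_X_Z hm hn p s).smul_right (Jz s)).smul_left (Jx p)
  have hsplit : Toric.mexp m n (-Toric.H m n Jx Jz) =
      NormedSpace.exp (∑ p : Vtx m n, Jx p • X m n p) *
        NormedSpace.exp (∑ s : Vtx m n, Jz s • Z m n s) := by
    rw [Toric.mexp, hH, Matrix.exp_add_of_commute _ _ hcomm]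
  -- exponential of the diagonal part
  have hexpZ : NormedSpace.exp (∑ s : Vtx m n, Jz s • Z m n s) =
      Matrix.diagonal fun ω => Real.exp (D ω) := by
    have hpi : NormedSpace.exp D = fun ω => Real.exp (D ω) := by
      funext ω
      rw [Pi.coe_exp, ← Real.exp_eq_exp_ℝ]
    rw [hZdiag, Matrix.exp_diagonal, hpi]
  -- diagonal entries of the X-part exponential
  have hdiagA : ∀ ω : SConf m n,
      (NormedSpace.exp (∑ p : Vtx m n, Jx p • X m n p)) ω ω =
        (∏ p : Vtx m n, Real.cosh (Jx p)) + ∏ p : Vtx m n, Real.sinh (Jx p) := by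
    intro ω
    rw [exp_sum_X hm hn Jx Finset.univ, Matrix.sum_apply]
    have term : ∀ T ∈ (Finset.univ : Finset (Vtx m n)).powerset,
        (((∏ p ∈ T, Real.sinh (Jx p)) * ∏ p ∈ Finset.univ \ T, Real.cosh (Jx p)) •
            XProd m n T) ω ω =
          (if T = ∅ then ∏ p : Vtx m n, Real.cosh (Jx p) else 0) +
          (if T = Finset.univ then ∏ p : Vtx m n, Real.sinh (Jx p) else 0) := by
      intro T _
      rw [Matrix.smul_apply, XProd_eq_Pm, Pm_diag]
      by_cases h0 : T = ∅
      · subst h0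
        have hne : (∅ : Finset (Vtx m n)) ≠ Finset.univ :=
          Finset.univ_nonempty.ne_empty.symm
        rw [if_pos (by simp), if_pos rfl, if_neg hne]
        simp
      · by_cases h1 : T = Finset.univ
        · subst h1
          rw [if_pos ((xconf_prod_eq_one_iff hm hn _).mpr (Or.inr rfl)), if_neg h0, if_pos rfl]
          simp
        · rw [if_neg (fun hh => by
            rcases (xconf_prod_eq_one_iff hm hn T).mp hh with h | h
            exacts [h0 h, h1 h]), if_neg h0, if_neg h1]
          simp
    rw [Finset.sum_congr rfl term, Finset.sum_add_distrib,
      Finset.sum_ite_eq' _ (∅ : Finset (Vtx m n)) _,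
      Finset.sum_ite_eq' _ (Finset.univ : Finset (Vtx m n)) _,
      if_pos (Finset.empty_mem_powerset _), if_pos (Finset.mem_powerset_self _)]
  -- compute the trace
  rw [hsplit, hexpZ]
  have htr : (NormedSpace.exp (∑ p : Vtx m n, Jx p • X m n p) *
      Matrix.diagonal fun ω => Real.exp (D ω)).trace =
      ∑ ω : SConf m n,
        (NormedSpace.exp (∑ p : Vtx m n, Jx p • X m n p)) ω ω * Real.exp (D ω) := by
    rw [Matrix.trace]
    refine Finset.sum_congr rfl fun ω _ => ?_
    rw [Matrix.diag]
    rw [Matrix.mul_diagonal]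
  rw [htr, Finset.sum_congr rfl fun ω _ => by rw [hdiagA ω], ← Finset.mul_sum]
  rw [hD]
  rw [sum_exp_z hm hn Jz]
  ring

end ToricAux


/-- The toric code partition function:
`tr(e^{-H}) = 2^{|E|} (∏_s cosh Jᶻ_s + ∏_s sinh Jᶻ_s)(∏_p cosh Jˣ_p + ∏_p sinh Jˣ_p)`,
where `|E| = 2mn`. -/
theorem toric_code_partition_function (m n : ℕ) [NeZero m] [NeZero n]
    (hm : 3 ≤ m) (hn : 3 ≤ n)
    (Jx Jz : Toric.Vtx m n → ℝ) (hJx : ∀ p, 0 ≤ Jx p) (hJz : ∀ s, 0 ≤ Jz s) :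
    (Toric.mexp m n (-Toric.H m n Jx Jz)).trace =
      2 ^ (2 * m * n) *
        ((∏ s : Toric.Vtx m n, Real.cosh (Jz s)) +
          ∏ s : Toric.Vtx m n, Real.sinh (Jz s)) *
        ((∏ p : Toric.Vtx m n, Real.cosh (Jx p)) +
          ∏ p : Toric.Vtx m n, Real.sinh (Jx p)) := by
  exact ToricAux.main hm hn Jx Jz
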